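/- Expected per-slot cost bounds for the online scheduling algorithm: when u is drawn uniformly from [0,1), for every slot t ∈ {1,…,T}: (i) the expected transmission cost of Alg. 2 in slot t satisfies E[C_{d(t)}] ≤ C_{k*_t} · x_{k*_t}(t); and (ii) for every user i, the expected age satisfies E[a_i(t)] ≤ Σ_{j=1}^t z_{i,j}(t), where x_{k*_t}(t) and z_{i,j}(t) are the final values computed by Alg. 1. -/

import Mathlib

open scoped Classical
open MeasureTheory

noncomputable section

/-- Age of information of user `i` under schedule `d`:
`a_i(0) = 0`, and `a_i(t) = 0` if `1_{i,d(t)}(t) = 1`, `a_i(t) = a_i(t-1) + 1` otherwise. -/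
def age (ind : ℕ → ℕ → ℕ → ℝ) (d : ℕ → ℕ) (i : ℕ) : ℕ → ℕ
  | 0 => 0
  | t + 1 => if ind i (d (t + 1)) (t + 1) = 1 then 0 else age ind d i t + 1

/-- Inner loop of Alg. 1 at a fixed slot: `innerLoop Ck θ ps j` is the value of the current
slot's `x`-variable after processing iterations `1, …, j`, where `ps j` is the (final)
contribution `Σ_{τ=j}^{t-1} x_{k*_τ}(τ)` of the earlier slots.  At iteration `j` the current
value of `Σ_{τ=j}^{t} x_{k*_τ}(τ)` is `ps j + innerLoop Ck θ ps (j-1)`; if it is `< 1`, the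
`x`-variable is increased by `(1/Ck) Σ_{τ=j}^{t} x_{k*_τ}(τ) + 1/(θ·Ck)`. -/
def innerLoop (Ck θ : ℝ) (ps : ℕ → ℝ) : ℕ → ℝ
  | 0 => 0
  | j + 1 =>
      if ps (j + 1) + innerLoop Ck θ ps j < 1 then
        innerLoop Ck θ ps j + (ps (j + 1) + innerLoop Ck θ ps j) / Ck + 1 / (θ * Ck)
      else innerLoop Ck θ ps j

/-- `xvec Ck θ t τ` : the value of `x_{k*_τ}(τ)` after Alg. 1 has processed slots `1, …, t`
(`Ck τ` stands for the cost `C_{k*_τ}` used in slot `τ`). -/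
def xvec (Ck : ℕ → ℝ) (θ : ℝ) : ℕ → ℕ → ℝ
  | 0, _ => 0
  | t + 1, τ =>
      if τ = t + 1 then
        innerLoop (Ck (t + 1)) θ (fun j => ∑ σ ∈ Finset.Ico j (t + 1), xvec Ck θ t σ) (t + 1)
      else xvec Ck θ t τ

/-- Final value of `x_{k*_t}(t)` computed by Alg. 1. -/
def xval (Ck : ℕ → ℝ) (θ : ℝ) (t : ℕ) : ℝ := xvec Ck θ t t

/-- `psFun Ck θ t j = Σ_{σ=j}^{t-1} x_{k*_σ}(σ)` (final values of the slots before `t`). -/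
def psFun (Ck : ℕ → ℝ) (θ : ℝ) (t : ℕ) (j : ℕ) : ℝ :=
  ∑ σ ∈ Finset.Ico j t, xvec Ck θ (t - 1) σ

/-- The update condition of Alg. 1 at iteration `j` of slot `t`: the current value of
`Σ_{τ=j}^{t} x_{k*_τ}(τ)` (earlier slots final, slot `t` after iterations `1,…,j-1`) is `< 1`. -/
def algCond (Ck : ℕ → ℝ) (θ : ℝ) (t j : ℕ) : Prop :=
  psFun Ck θ t j + innerLoop (Ck t) θ (psFun Ck θ t) (j - 1) < 1

/-- Final value of `z_{i,j}(t)` computed by Alg. 1 (it is the same for every user `i`). -/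
def zval (Ck : ℕ → ℝ) (θ : ℝ) (j t : ℕ) : ℝ :=
  if algCond Ck θ t j then
    1 - (psFun Ck θ t j + innerLoop (Ck t) θ (psFun Ck θ t) (j - 1))
  else 0

/-- Final value of `y_{i,j}(t)` computed by Alg. 1 (it is the same for every user `i`). -/
def yval (Ck : ℕ → ℝ) (θ : ℝ) (N : ℕ) (j t : ℕ) : ℝ :=
  if algCond Ck θ t j then 1 / N else 0

/-- `k*_t`: the minimum power level `k ≥ 1` with `1_{i,k}(t) = 1` for every user `i`. -/
def kstar (ind : ℕ → ℕ → ℕ → ℝ) (N : ℕ) (t : ℕ) : ℕ :=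
  sInf {k : ℕ | 1 ≤ k ∧ ∀ i ∈ Finset.Icc 1 N, ind i k t = 1}

/-- `X(t) = Σ_{τ=1}^t min{x_{k*_τ}(τ), 1}`, used by Alg. 2 (so `X(0) = 0`). -/
def bigX (Ck : ℕ → ℝ) (θ : ℝ) (t : ℕ) : ℝ :=
  ∑ τ ∈ Finset.Icc 1 t, min (xval Ck θ τ) 1

/-- Alg. 2 transmits in slot `t` for randomness `u` iff `u + k ∈ [X(t-1), X(t))` for some
integer `k ≥ 0`. -/
def transmits (Ck : ℕ → ℝ) (θ : ℝ) (u : ℝ) (t : ℕ) : Prop :=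
  ∃ k : ℕ, bigX Ck θ (t - 1) ≤ u + k ∧ u + k < bigX Ck θ t

/-- The decision of Alg. 2 in slot `t` for randomness `u`: transmit with power `k*_t`, or idle. -/
def dAlg (ind : ℕ → ℕ → ℕ → ℝ) (N : ℕ) (Ck : ℕ → ℝ) (θ : ℝ) (u : ℝ) (t : ℕ) : ℕ :=
  if transmits Ck θ u t then kstar ind N t else 0

/-- The constant `θ = (1 + 1/C_M)^⌊C_1⌋ − 1` of Alg. 1. -/
def thetaOf (C : ℕ → ℝ) (M : ℕ) : ℝ := (1 + 1 / C M) ^ ⌊C 1⌋ - 1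

/- ========== auxiliary lemmas ========== -/

lemma innerLoop_nonneg {Ck θ : ℝ} {ps : ℕ → ℝ} (hC : 0 < Ck) (hθ : 0 < θ)
    (hps : ∀ j, 0 ≤ ps j) : ∀ j, 0 ≤ innerLoop Ck θ ps j := by
  intro j
  induction j with
  | zero => simp [innerLoop]
  | succ n ih =>
    rw [innerLoop]
    split
    · have h1 : 0 ≤ (ps (n + 1) + innerLoop Ck θ ps n) / Ck :=
        div_nonneg (by linarith [hps (n + 1)]) hC.le
      have h2 : 0 ≤ 1 / (θ * Ck) := by positivity
      linarith
    · exact ih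

lemma innerLoop_mono {Ck θ : ℝ} {ps : ℕ → ℝ} (hC : 0 < Ck) (hθ : 0 < θ)
    (hps : ∀ j, 0 ≤ ps j) : Monotone (innerLoop Ck θ ps) := by
  apply monotone_nat_of_le_succ
  intro n
  conv_rhs => rw [innerLoop]
  split
  · have h1 : 0 ≤ (ps (n + 1) + innerLoop Ck θ ps n) / Ck :=
      div_nonneg (by linarith [hps (n + 1), innerLoop_nonneg hC hθ hps n]) hC.le
    have h2 : 0 ≤ 1 / (θ * Ck) := by positivity
    linarith
  · exact le_rfl

lemma xvec_nonneg {Ck : ℕ → ℝ} {θ : ℝ} (hC : ∀ τ, 0 < Ck τ) (hθ : 0 < θ) :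
    ∀ t τ, 0 ≤ xvec Ck θ t τ := by
  intro t
  induction t with
  | zero => intro τ; simp [xvec]
  | succ s ih =>
    intro τ
    rw [xvec]
    split
    · exact innerLoop_nonneg (hC _) hθ (fun j => Finset.sum_nonneg fun σ _ => ih σ) _
    · exact ih τ

lemma xval_nonneg {Ck : ℕ → ℝ} {θ : ℝ} (hC : ∀ τ, 0 < Ck τ) (hθ : 0 < θ) (t : ℕ) :
    0 ≤ xval Ck θ t := xvec_nonneg hC hθ t t

lemma xval_succ (Ck : ℕ → ℝ) (θ : ℝ) (s : ℕ) :
    xval Ck θ (s + 1) = innerLoop (Ck (s + 1)) θ (psFun Ck θ (s + 1)) (s + 1) := by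
  rw [xval, xvec, if_pos rfl]
  congr 1

lemma xvec_stable (Ck : ℕ → ℝ) (θ : ℝ) : ∀ s τ, τ ≤ s → xvec Ck θ s τ = xval Ck θ τ := by
  intro s
  induction s with
  | zero => intro τ hτ; interval_cases τ; rfl
  | succ s ih =>
    intro τ hτ
    rw [xvec]
    split
    · rename_i h; subst h; exact (xval_succ Ck θ s).symm
    · rename_i h; exact ih τ (by omega)

lemma psFun_nonneg {Ck : ℕ → ℝ} {θ : ℝ} (hC : ∀ τ, 0 < Ck τ) (hθ : 0 < θ) (t j : ℕ) :
    0 ≤ psFun Ck θ t j :=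
  Finset.sum_nonneg fun σ _ => xvec_nonneg hC hθ _ σ

lemma psFun_eq (Ck : ℕ → ℝ) (θ : ℝ) (t j : ℕ) (ht : 1 ≤ t) :
    psFun Ck θ t j = ∑ σ ∈ Finset.Ico j t, xval Ck θ σ := by
  refine Finset.sum_congr rfl fun σ hσ => ?_
  rw [Finset.mem_Ico] at hσ
  exact xvec_stable Ck θ (t - 1) σ (by omega)

lemma zval_nonneg (Ck : ℕ → ℝ) (θ : ℝ) (j t : ℕ) : 0 ≤ zval Ck θ j t := by
  rw [zval]
  split
  · rename_i h; rw [algCond] at h; linarith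
  · exact le_rfl

lemma key_ineq {Ck : ℕ → ℝ} {θ : ℝ} (hC : ∀ τ, 0 < Ck τ) (hθ : 0 < θ)
    {t j : ℕ} (hj : 1 ≤ j) (hjt : j ≤ t) :
    max 0 (1 - ∑ τ ∈ Finset.Icc j t, min (xval Ck θ τ) 1) ≤ zval Ck θ j t := by
  obtain ⟨s, rfl⟩ : ∃ s, t = s + 1 := ⟨t - 1, by omega⟩
  by_cases hex : ∃ τ ∈ Finset.Icc j (s + 1), 1 ≤ xval Ck θ τ
  · obtain ⟨τ0, hτ0, h1⟩ := hex
    have hsum : (1 : ℝ) ≤ ∑ τ ∈ Finset.Icc j (s + 1), min (xval Ck θ τ) 1 := by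
      calc (1 : ℝ) = min (xval Ck θ τ0) 1 := (min_eq_right h1).symm
        _ ≤ _ := Finset.single_le_sum
            (fun τ _ => le_min (xval_nonneg hC hθ τ) zero_le_one) hτ0
    rw [max_eq_left (by linarith)]
    exact zval_nonneg Ck θ j (s + 1)
  · push_neg at hex
    have hsum_eq : ∑ τ ∈ Finset.Icc j (s + 1), min (xval Ck θ τ) 1
        = ∑ τ ∈ Finset.Icc j (s + 1), xval Ck θ τ :=
      Finset.sum_congr rfl fun τ hτ => min_eq_left (hex τ hτ).le
    have hsplit : ∑ τ ∈ Finset.Icc j (s + 1), xval Ck θ τ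
        = psFun Ck θ (s + 1) j + xval Ck θ (s + 1) := by
      rw [← Finset.Ico_add_one_right_eq_Icc, Finset.sum_Ico_succ_top (by omega), psFun_eq Ck θ _ j (by omega)]
    have hmono : innerLoop (Ck (s + 1)) θ (psFun Ck θ (s + 1)) (j - 1) ≤ xval Ck θ (s + 1) := by
      rw [xval_succ]
      exact innerLoop_mono (hC _) hθ (fun j' => psFun_nonneg hC hθ _ j') (by omega)
    by_cases hcond : algCond Ck θ (s + 1) j
    · rw [zval, if_pos hcond]
      rw [algCond] at hcond
      exact max_le (by linarith) (by rw [hsum_eq, hsplit]; linarith)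
    · rw [zval, if_neg hcond]
      rw [algCond] at hcond
      push_neg at hcond
      exact max_le le_rfl (by rw [hsum_eq, hsplit]; linarith)

/- ========== the transmit sets and their measure ========== -/

def ASet (a b : ℝ) : Set ℝ := {u | ∃ k : ℕ, a ≤ u + k ∧ u + k < b}

lemma ASet_eq_iUnion (a b : ℝ) : ASet a b = ⋃ k : ℕ, Set.Ico (a - (k : ℝ)) (b - (k : ℝ)) := by
  ext u
  simp only [ASet, Set.mem_setOf_eq, Set.mem_iUnion, Set.mem_Ico, sub_le_iff_le_add,
    lt_sub_iff_add_lt]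

lemma ASet_measurable (a b : ℝ) : MeasurableSet (ASet a b) := by
  rw [ASet_eq_iUnion]
  exact MeasurableSet.iUnion fun k => measurableSet_Ico

lemma ASet_subset {a a' b : ℝ} (h : a' ≤ a) : ASet a b ⊆ ASet a' b := by
  rintro u ⟨k, hk1, hk2⟩
  exact ⟨k, le_trans h hk1, hk2⟩

lemma ASet_split {lo mid hi : ℝ} (h1 : lo ≤ mid) (h2 : mid ≤ hi) {u : ℝ}
    (hmid : u ∉ ASet mid hi) : u ∈ ASet lo hi ↔ u ∈ ASet lo mid := by
  constructor
  · rintro ⟨k, hk1, hk2⟩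
    refine ⟨k, hk1, ?_⟩
    by_contra hge
    push_neg at hge
    exact hmid ⟨k, hge, hk2⟩
  · rintro ⟨k, hk1, hk2⟩
    exact ⟨k, hk1, lt_of_lt_of_le hk2 h2⟩

lemma volume_ASet {a b : ℝ} (h0 : 0 ≤ a) (hab : a ≤ b) :
    volume (Set.Ico (0 : ℝ) 1 ∩ ASet a b) = ENNReal.ofReal (min (b - a) 1) := by
  rcases le_or_gt b (a + 1) with hb | hb
  · -- b ≤ a + 1
    have hmin : min (b - a) 1 = b - a := min_eq_left (by linarith)
    rw [hmin]
    set α := Int.fract a with hα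
    have hα0 : 0 ≤ α := Int.fract_nonneg a
    have hα1 : α < 1 := Int.fract_lt_one a
    have hfl : (⌊a⌋ : ℝ) = a - α := by rw [hα, Int.self_sub_fract]
    have hfl0 : (0 : ℤ) ≤ ⌊a⌋ := Int.floor_nonneg.mpr h0
    set c := b - a with hc
    have hc0 : 0 ≤ c := by linarith
    have hc1 : c ≤ 1 := by linarith
    have hcast : ((⌊a⌋.toNat : ℕ) : ℝ) = a - α := by
      rw [← hfl]
      exact_mod_cast Int.toNat_of_nonneg hfl0
    have hset : Set.Ico (0 : ℝ) 1 ∩ ASet a b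
        = Set.Ico α (min (α + c) 1) ∪ Set.Ico 0 (α + c - 1) := by
      ext u
      simp only [Set.mem_inter_iff, Set.mem_Ico, Set.mem_union]
      constructor
      · rintro ⟨⟨hu0, hu1⟩, k, hk1, hk2⟩
        have hm0 : (((k : ℤ) - ⌊a⌋ : ℤ) : ℝ) = (k : ℝ) - (a - α) := by push_cast [hfl]; ring
        have hb1' : (-1 : ℤ) < (k : ℤ) - ⌊a⌋ := by
          have h1 : (-1 : ℝ) < (((k : ℤ) - ⌊a⌋ : ℤ) : ℝ) := by rw [hm0]; linarith
          exact_mod_cast h1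
        have hb2' : ((k : ℤ) - ⌊a⌋) < 2 := by
          have h2 : (((k : ℤ) - ⌊a⌋ : ℤ) : ℝ) < 2 := by rw [hm0]; linarith
          exact_mod_cast h2
        rcases (by omega : (k : ℤ) - ⌊a⌋ = 0 ∨ (k : ℤ) - ⌊a⌋ = 1) with hm | hm
        · have hk : (k : ℝ) = a - α := by rw [hm] at hm0; push_cast at hm0; linarith
          rw [hk] at hk1 hk2
          left
          exact ⟨by linarith, lt_min (by linarith) hu1⟩
        · have hk : (k : ℝ) = a - α + 1 := by rw [hm] at hm0; push_cast at hm0; linarith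
          rw [hk] at hk1 hk2
          right
          exact ⟨hu0, by linarith⟩
      · rintro (⟨hu1, hu2⟩ | ⟨hu1, hu2⟩)
        · refine ⟨⟨le_trans hα0 hu1, lt_of_lt_of_le hu2 (min_le_right _ _)⟩,
            ⌊a⌋.toNat, ?_, ?_⟩
          · rw [hcast]; linarith
          · rw [hcast]
            have := lt_of_lt_of_le hu2 (min_le_left _ _)
            linarith
        · refine ⟨⟨hu1, by linarith⟩, ⌊a⌋.toNat + 1, ?_, ?_⟩
          · push_cast
            rw [hcast]; linarith
          · push_cast
            rw [hcast]; linarith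
    rw [hset, measure_union ?disj measurableSet_Ico, Real.volume_Ico, Real.volume_Ico]
    case disj =>
      rw [Set.disjoint_left]
      rintro u ⟨hu1, _⟩ ⟨_, hu4⟩
      linarith
    rcases le_total (α + c) 1 with hle | hle
    · rw [min_eq_left hle]
      rw [ENNReal.ofReal_eq_zero.mpr (by linarith : α + c - 1 - 0 ≤ 0)]
      rw [add_zero]
      congr 1
      ring
    · rw [min_eq_right hle]
      rw [← ENNReal.ofReal_add (by linarith) (by linarith)]
      congr 1
      ring
  · -- a + 1 < b : the set is all of [0,1)
    have hmin : min (b - a) 1 = 1 := min_eq_right (by linarith)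
    have hsub : Set.Ico (0 : ℝ) 1 ⊆ ASet a b := by
      rintro u ⟨hu0, hu1⟩
      have hcl : (-1 : ℤ) < ⌈a - u⌉ := Int.lt_ceil.mpr (by push_cast; linarith)
      have hnn : (0 : ℤ) ≤ ⌈a - u⌉ := by omega
      have hc2 : ((⌈a - u⌉.toNat : ℕ) : ℝ) = ((⌈a - u⌉ : ℤ) : ℝ) := by
        exact_mod_cast Int.toNat_of_nonneg hnn
      refine ⟨⌈a - u⌉.toNat, ?_, ?_⟩
      · rw [hc2]
        have := Int.le_ceil (a - u)
        linarith
      · rw [hc2]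
        have := Int.ceil_lt_add_one (a - u)
        linarith
    rw [Set.inter_eq_left.mpr hsub, hmin, Real.volume_Ico]
    norm_num

/- ========== bigX facts ========== -/

lemma bigX_nonneg {Ck : ℕ → ℝ} {θ : ℝ} (hC : ∀ τ, 0 < Ck τ) (hθ : 0 < θ) (t : ℕ) :
    0 ≤ bigX Ck θ t :=
  Finset.sum_nonneg fun τ _ => le_min (xval_nonneg hC hθ τ) zero_le_one

lemma bigX_mono {Ck : ℕ → ℝ} {θ : ℝ} (hC : ∀ τ, 0 < Ck τ) (hθ : 0 < θ) :
    Monotone (bigX Ck θ) := by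
  intro m n hmn
  exact Finset.sum_le_sum_of_subset_of_nonneg
    (Finset.Icc_subset_Icc_right hmn)
    (fun τ _ _ => le_min (xval_nonneg hC hθ τ) zero_le_one)

lemma bigX_succ (Ck : ℕ → ℝ) (θ : ℝ) (s : ℕ) :
    bigX Ck θ (s + 1) = bigX Ck θ s + min (xval Ck θ (s + 1)) 1 := by
  rw [bigX, bigX, Finset.sum_Icc_succ_top (by omega)]

lemma bigX_diff (Ck : ℕ → ℝ) (θ : ℝ) {j t : ℕ} (hj : 1 ≤ j) (hjt : j ≤ t) :
    bigX Ck θ t - bigX Ck θ (j - 1) = ∑ τ ∈ Finset.Icc j t, min (xval Ck θ τ) 1 := by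
  rw [bigX, bigX]
  have : Finset.Icc 1 t = Finset.Icc 1 (j - 1) ∪ Finset.Icc j t := by
    ext x; simp only [Finset.mem_union, Finset.mem_Icc]; omega
  rw [this, Finset.sum_union (by rw [Finset.disjoint_left]; intro x hx hx'; simp at hx hx'; omega)]
  ring

/- ========== age formula ========== -/

lemma age_eq (ind : ℕ → ℕ → ℕ → ℝ) (N : ℕ) (Ck : ℕ → ℝ) (θ : ℝ)
    (hC : ∀ τ, 0 < Ck τ) (hθ : 0 < θ)
    (hzero : ∀ i t, ind i 0 t = 0)
    (hker : ∀ t, ∀ i ∈ Finset.Icc 1 N, ind i (kstar ind N t) t = 1)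
    (i : ℕ) (hi : i ∈ Finset.Icc 1 N) (u : ℝ) :
    ∀ t, (age ind (dAlg ind N Ck θ u) i t : ℝ)
      = ∑ j ∈ Finset.Icc 1 t,
          Set.indicator (ASet (bigX Ck θ (j - 1)) (bigX Ck θ t))ᶜ (fun _ => (1 : ℝ)) u := by
  intro t
  induction t with
  | zero => simp [age]
  | succ s ih =>
    by_cases h : transmits Ck θ u (s + 1)
    · have hd : dAlg ind N Ck θ u (s + 1) = kstar ind N (s + 1) := if_pos h
      have hz : age ind (dAlg ind N Ck θ u) i (s + 1) = 0 := by
        rw [age, hd, hker (s + 1) i hi, if_pos rfl]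
      rw [hz]
      symm
      push_cast
      apply Finset.sum_eq_zero
      intro j hj
      apply Set.indicator_of_notMem
      rw [Set.notMem_compl_iff]
      have hjs : j - 1 ≤ s := by simp at hj; omega
      exact ASet_subset (bigX_mono hC hθ hjs) h
    · have hd : dAlg ind N Ck θ u (s + 1) = 0 := if_neg h
      have hage : (age ind (dAlg ind N Ck θ u) i (s + 1) : ℝ)
          = (age ind (dAlg ind N Ck θ u) i s : ℝ) + 1 := by
        rw [age, hd, hzero i (s + 1), if_neg (by norm_num)]
        push_cast
        ring
      rw [hage, ih, Finset.sum_Icc_succ_top (by omega : 1 ≤ s + 1)]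
      congr 1
      · apply Finset.sum_congr rfl
        intro j hj
        have hjs : j ≤ s := by simp at hj; omega
        have hsplit := ASet_split (bigX_mono hC hθ (show j - 1 ≤ s by omega))
          (bigX_mono hC hθ (show s ≤ s + 1 by omega)) (u := u) h
        by_cases hm : u ∈ ASet (bigX Ck θ (j - 1)) (bigX Ck θ s)
        · rw [Set.indicator_of_notMem (Set.notMem_compl_iff.mpr hm),
            Set.indicator_of_notMem (Set.notMem_compl_iff.mpr (hsplit.mpr hm))]
        · rw [Set.indicator_of_mem (Set.mem_compl hm),
            Set.indicator_of_mem (Set.mem_compl (fun hh => hm (hsplit.mp hh)))]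
      · exact (Set.indicator_of_mem (Set.mem_compl h) (fun _ => (1 : ℝ))).symm

/- ========== measure of the complement ========== -/

lemma volume_compl_real {a b : ℝ} (h0 : 0 ≤ a) (hab : a ≤ b) :
    (volume (Set.Ico (0 : ℝ) 1 ∩ (ASet a b)ᶜ)).toReal = 1 - min (b - a) 1 := by
  have hseteq : Set.Ico (0 : ℝ) 1 ∩ (ASet a b)ᶜ
      = Set.Ico (0 : ℝ) 1 \ (Set.Ico (0 : ℝ) 1 ∩ ASet a b) := by
    ext u
    simp only [Set.mem_inter_iff, Set.mem_compl_iff, Set.mem_diff]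
    tauto
  rw [hseteq, measure_diff Set.inter_subset_left
      ((measurableSet_Ico.inter (ASet_measurable a b)).nullMeasurableSet)
      (ne_top_of_le_ne_top (by rw [Real.volume_Ico]; exact ENNReal.ofReal_ne_top)
        (measure_mono Set.inter_subset_left)),
    volume_ASet h0 hab, Real.volume_Ico]
  rw [ENNReal.toReal_sub_of_le
      (by
        rw [ENNReal.ofReal_le_ofReal_iff (by norm_num)]
        have := min_le_right (b - a) 1
        linarith)
      ENNReal.ofReal_ne_top]
  rw [ENNReal.toReal_ofReal (by norm_num), ENNReal.toReal_ofReal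
      (le_min (by linarith) zero_le_one)]
  norm_num

/-- expected per-slot cost bounds for Alg. 2: when `u` is drawn uniformly from
`[0,1)`, for every slot `t ∈ {1,…,T}`, (i) `E[C_{d(t)}] ≤ C_{k*_t} · x_{k*_t}(t)` and
(ii) `E[a_i(t)] ≤ Σ_{j=1}^t z_{i,j}(t)` for every user `i`, where `x_{k*_t}(t)` and
`z_{i,j}(t)` are the final values computed by Alg. 1. -/
theorem stmt12 (N M T : ℕ) (hN : 1 ≤ N) (hM : 1 ≤ M) (hT : 1 ≤ T)
    (ind : ℕ → ℕ → ℕ → ℝ)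
    (hind01 : ∀ i k t, ind i k t = 0 ∨ ind i k t = 1)
    (hmono : ∀ i k k' t, k ≤ k' → ind i k t = 1 → ind i k' t = 1)
    (hcov : ∀ i t, ind i M t = 1)
    (hzero : ∀ i t, ind i 0 t = 0)
    (C : ℕ → ℝ) (hC0 : C 0 = 0) (hC1 : 1 ≤ C 1)
    (hCmono : ∀ k k', 1 ≤ k → k ≤ k' → k' ≤ M → C k ≤ C k') :
    ∀ t ∈ Finset.Icc 1 T,
      (∫ u in Set.Ico (0 : ℝ) 1,
          C (dAlg ind N (fun τ => C (kstar ind N τ)) (thetaOf C M) u t))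
        ≤ C (kstar ind N t) * xval (fun τ => C (kstar ind N τ)) (thetaOf C M) t ∧
      ∀ i ∈ Finset.Icc 1 N,
        (∫ u in Set.Ico (0 : ℝ) 1,
            (age ind (dAlg ind N (fun τ => C (kstar ind N τ)) (thetaOf C M) u) i t : ℝ))
          ≤ ∑ j ∈ Finset.Icc 1 t, zval (fun τ => C (kstar ind N τ)) (thetaOf C M) j t := by
  intro t ht
  rw [Finset.mem_Icc] at ht
  set Ck : ℕ → ℝ := fun τ => C (kstar ind N τ) with hCkdef
  set θ : ℝ := thetaOf C M with hθdef
  have hne : ∀ τ, {k : ℕ | 1 ≤ k ∧ ∀ i ∈ Finset.Icc 1 N, ind i k τ = 1}.Nonempty :=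
    fun τ => ⟨M, hM, fun i _ => hcov i τ⟩
  have hk1 : ∀ τ, 1 ≤ kstar ind N τ := fun τ => (Nat.sInf_mem (hne τ)).1
  have hkM : ∀ τ, kstar ind N τ ≤ M := fun τ => Nat.sInf_le ⟨hM, fun i _ => hcov i τ⟩
  have hker : ∀ τ, ∀ i ∈ Finset.Icc 1 N, ind i (kstar ind N τ) τ = 1 :=
    fun τ => (Nat.sInf_mem (hne τ)).2
  have hCk1 : ∀ τ, 1 ≤ Ck τ := fun τ => hC1.trans (hCmono 1 _ le_rfl (hk1 τ) (hkM τ))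
  have hCpos : ∀ τ, 0 < Ck τ := fun τ => lt_of_lt_of_le one_pos (hCk1 τ)
  have hCM : (1 : ℝ) ≤ C M := hC1.trans (hCmono 1 M le_rfl hM le_rfl)
  have hbase : (1 : ℝ) < 1 + 1 / C M := by
    have h2 : (0 : ℝ) < 1 / C M := by positivity
    linarith
  have hexp : (0 : ℤ) < ⌊C 1⌋ := by
    have h3 : (1 : ℤ) ≤ ⌊C 1⌋ := Int.le_floor.mpr (by exact_mod_cast hC1)
    omega
  have hθpos : 0 < θ := by
    rw [hθdef, thetaOf]
    have h4 := one_lt_zpow₀ hbase hexp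
    linarith
  obtain ⟨s, rfl⟩ : ∃ s, t = s + 1 := ⟨t - 1, by omega⟩
  have hX0 : 0 ≤ bigX Ck θ s := bigX_nonneg hCpos hθpos s
  have hXm : bigX Ck θ s ≤ bigX Ck θ (s + 1) := bigX_mono hCpos hθpos (by omega)
  constructor
  · -- part (i)
    have hrw : (fun u : ℝ => C (dAlg ind N Ck θ u (s + 1)))
        = Set.indicator (ASet (bigX Ck θ s) (bigX Ck θ (s + 1))) (fun _ => Ck (s + 1)) := by
      funext u
      by_cases h : transmits Ck θ u (s + 1)
      · rw [dAlg, if_pos h]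
        exact (Set.indicator_of_mem h (fun _ => Ck (s + 1))).symm
      · rw [dAlg, if_neg h, hC0]
        exact (Set.indicator_of_notMem h (fun _ => Ck (s + 1))).symm
    calc ∫ u in Set.Ico (0 : ℝ) 1, C (dAlg ind N Ck θ u (s + 1))
        = ∫ u in Set.Ico (0 : ℝ) 1,
            Set.indicator (ASet (bigX Ck θ s) (bigX Ck θ (s + 1))) (fun _ => Ck (s + 1)) u := by
          rw [hrw]
      _ = ∫ _u in Set.Ico (0 : ℝ) 1 ∩ ASet (bigX Ck θ s) (bigX Ck θ (s + 1)), Ck (s + 1) :=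
          setIntegral_indicator (ASet_measurable _ _)
      _ = (volume (Set.Ico (0 : ℝ) 1 ∩ ASet (bigX Ck θ s) (bigX Ck θ (s + 1)))).toReal
            • Ck (s + 1) := setIntegral_const _
      _ ≤ C (kstar ind N (s + 1)) * xval Ck θ (s + 1) := by
          rw [volume_ASet hX0 hXm, smul_eq_mul]
          have hd : bigX Ck θ (s + 1) - bigX Ck θ s = min (xval Ck θ (s + 1)) 1 := by
            rw [bigX_succ]; ring
          rw [hd, min_eq_left (min_le_right _ _),
            ENNReal.toReal_ofReal (le_min (xval_nonneg hCpos hθpos _) zero_le_one)]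
          have hle : min (xval Ck θ (s + 1)) 1 ≤ xval Ck θ (s + 1) := min_le_left _ _
          have hCnn : 0 ≤ Ck (s + 1) := (hCpos _).le
          calc min (xval Ck θ (s + 1)) 1 * Ck (s + 1)
              ≤ xval Ck θ (s + 1) * Ck (s + 1) := by
                exact mul_le_mul_of_nonneg_right hle hCnn
            _ = C (kstar ind N (s + 1)) * xval Ck θ (s + 1) := by
                rw [mul_comm]
  · -- part (ii)
    intro i hi
    have hint : ∀ j : ℕ, Integrable
        (Set.indicator (ASet (bigX Ck θ (j - 1)) (bigX Ck θ (s + 1)))ᶜ (fun _ => (1 : ℝ)))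
        (volume.restrict (Set.Ico (0 : ℝ) 1)) := by
      intro j
      refine Integrable.indicator ?_ (ASet_measurable _ _).compl
      refine (integrableOn_const_iff).mpr (Or.inr ?_)
      rw [Real.volume_Ico]
      exact ENNReal.ofReal_lt_top
    have hage : (fun u : ℝ => (age ind (dAlg ind N Ck θ u) i (s + 1) : ℝ))
        = fun u => ∑ j ∈ Finset.Icc 1 (s + 1),
            Set.indicator (ASet (bigX Ck θ (j - 1)) (bigX Ck θ (s + 1)))ᶜ
              (fun _ => (1 : ℝ)) u :=
      funext fun u => age_eq ind N Ck θ hCpos hθpos hzero hker i hi u (s + 1)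
    calc ∫ u in Set.Ico (0 : ℝ) 1, (age ind (dAlg ind N Ck θ u) i (s + 1) : ℝ)
        = ∑ j ∈ Finset.Icc 1 (s + 1), ∫ u in Set.Ico (0 : ℝ) 1,
            Set.indicator (ASet (bigX Ck θ (j - 1)) (bigX Ck θ (s + 1)))ᶜ
              (fun _ => (1 : ℝ)) u := by
          rw [hage]
          exact integral_finset_sum _ (fun j _ => hint j)
      _ ≤ ∑ j ∈ Finset.Icc 1 (s + 1), zval Ck θ j (s + 1) := by
          apply Finset.sum_le_sum
          intro j hj
          rw [Finset.mem_Icc] at hj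
          have hj0 : 0 ≤ bigX Ck θ (j - 1) := bigX_nonneg hCpos hθpos _
          have hjm : bigX Ck θ (j - 1) ≤ bigX Ck θ (s + 1) :=
            bigX_mono hCpos hθpos (by omega)
          rw [setIntegral_indicator (ASet_measurable _ _).compl, setIntegral_const,
            smul_eq_mul, mul_one, measureReal_def, volume_compl_real hj0 hjm,
            bigX_diff Ck θ hj.1 hj.2]
          have hkey := key_ineq hCpos hθpos hj.1 hj.2
          set c := ∑ τ ∈ Finset.Icc j (s + 1), min (xval Ck θ τ) 1 with hc
          rcases le_total c 1 with hle | hle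
          · rw [min_eq_left hle]
            exact le_trans (le_max_right _ _) hkey
          · rw [min_eq_right hle]
            simpa using le_trans (le_max_left 0 (1 - c)) hkey

end
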